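/- Let Φ be an n×m real matrix, R an m×m real matrix, S an n×n real matrix, and Wᵀ := R (SΦR)⁺ S. If Im(ΦR) ∩ ker(S) = {0}, then Im(ΦWᵀ) = Im(ΦR). -/
import Mathlib


open Matrix

/-- `B` is the Moore–Penrose pseudoinverse of `A` (the four Penrose conditions). -/
def IsMoorePenrose {k l : ℕ} (A : Matrix (Fin k) (Fin l) ℝ)
    (B : Matrix (Fin l) (Fin k) ℝ) : Prop :=
  A * B * A = A ∧ B * A * B = B ∧ (A * B)ᵀ = A * B ∧ (B * A)ᵀ = B * A

theorem stmt10 {n m : ℕ} (Φ : Matrix (Fin n) (Fin m) ℝ)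
    (R : Matrix (Fin m) (Fin m) ℝ) (S : Matrix (Fin n) (Fin n) ℝ)
    (P : Matrix (Fin m) (Fin n) ℝ) (hP : IsMoorePenrose (S * Φ * R) P)
    (Wt : Matrix (Fin m) (Fin n) ℝ) (hW : Wt = R * P * S)
    (hint : LinearMap.range (Matrix.toLin' (Φ * R)) ⊓ LinearMap.ker (Matrix.toLin' S) = ⊥) :
    LinearMap.range (Matrix.toLin' (Φ * Wt)) = LinearMap.range (Matrix.toLin' (Φ * R)) := by
  subst hW
  obtain ⟨h1, -, -, -⟩ := hP
  have hprod : Φ * (R * P * S) = (Φ * R) * (P * S) := by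
    simp only [Matrix.mul_assoc]
  apply le_antisymm
  · rintro y ⟨x, rfl⟩
    exact ⟨Matrix.toLin' (P * S) x, by simp [hprod, Matrix.toLin'_mul]⟩
  · rintro y ⟨x, rfl⟩
    refine ⟨Matrix.toLin' (Φ * R) x, ?_⟩
    have hM : S * ((Φ * R) * ((P * S) * (Φ * R))) = S * (Φ * R) := by
      simpa [Matrix.mul_assoc] using h1
    have hd : Matrix.toLin' (Φ * R)
        (Matrix.toLin' (P * S) (Matrix.toLin' (Φ * R) x) - x) = 0 := by
      have hmem : Matrix.toLin' (Φ * R)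
          (Matrix.toLin' (P * S) (Matrix.toLin' (Φ * R) x) - x)
          ∈ LinearMap.range (Matrix.toLin' (Φ * R)) ⊓ LinearMap.ker (Matrix.toLin' S) := by
        constructor
        · exact ⟨_, rfl⟩
        · have heq : Matrix.toLin' S (Matrix.toLin' (Φ * R)
              (Matrix.toLin' (P * S) (Matrix.toLin' (Φ * R) x)))
              = Matrix.toLin' (S * ((Φ * R) * ((P * S) * (Φ * R)))) x := by
            simp [Matrix.toLin'_mul]
          refine LinearMap.mem_ker.mpr ?_
          rw [map_sub, map_sub, heq, hM]
          simp [Matrix.toLin'_mul]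
      rw [hint] at hmem
      simpa using hmem
    have h5 : Matrix.toLin' (Φ * R)
        (Matrix.toLin' (P * S) (Matrix.toLin' (Φ * R) x))
        = Matrix.toLin' (Φ * R) x := by
      rw [map_sub, sub_eq_zero] at hd
      exact hd
    rw [hprod, Matrix.toLin'_mul]
    exact h5
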